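/- If Z has the extended skew-normal density f(z) = (1/Φ(τ)) φ(z) Φ(τ√(1+α²) + αz), then E[Z] = ζ₁(τ)·δ, where ζ₁(x) = φ(x)/Φ(x) and δ = α/√(1+α²). -/

import Mathlib

open MeasureTheory Real
open Filter Topology

noncomputable def phi (x : ℝ) : ℝ := (Real.sqrt (2 * Real.pi))⁻¹ * Real.exp (-x ^ 2 / 2)

noncomputable def Phi (x : ℝ) : ℝ := ∫ t in Set.Iic x, phi t

noncomputable def zeta1 (x : ℝ) : ℝ := phi x / Phi x

/-- ESN(0,1,α,τ) density -/
noncomputable def esnPdf (α τ z : ℝ) : ℝ :=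
  (Phi τ)⁻¹ * phi z * Phi (τ * Real.sqrt (1 + α ^ 2) + α * z)

lemma phi_nonneg (x : ℝ) : 0 ≤ phi x := by
  unfold phi; positivity

lemma continuous_phi : Continuous phi := by
  unfold phi
  exact continuous_const.mul ((continuous_id.pow 2).neg.div_const 2).rexp

lemma phi_eq (x : ℝ) : phi x = (Real.sqrt (2 * Real.pi))⁻¹ * Real.exp (-(1/2) * x ^ 2) := by
  unfold phi; ring_nf

lemma integrable_phi : Integrable phi := by
  simp only [funext phi_eq]
  exact (integrable_exp_neg_mul_sq (by norm_num)).const_mul _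

lemma integral_phi : ∫ x, phi x = 1 := by
  simp only [funext phi_eq]
  rw [integral_const_mul, integral_gaussian]
  rw [show (π / (1/2)) = 2 * π by ring]
  rw [inv_mul_cancel₀ (by positivity : Real.sqrt (2*π) ≠ 0)]

lemma Phi_nonneg (x : ℝ) : 0 ≤ Phi x :=
  integral_nonneg fun _ => phi_nonneg _

lemma Phi_le_one (x : ℝ) : Phi x ≤ 1 := by
  rw [← integral_phi]
  exact setIntegral_le_integral integrable_phi (Filter.Eventually.of_forall fun _ => phi_nonneg _)

lemma hasDerivAt_Phi (x : ℝ) : HasDerivAt Phi (phi x) x := by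
  have h : ∀ u : ℝ, Phi u = Phi 0 + ∫ t in (0:ℝ)..u, phi t := by
    intro u
    unfold Phi
    rw [← sub_eq_iff_eq_add']
    exact intervalIntegral.integral_Iic_sub_Iic integrable_phi.integrableOn
      integrable_phi.integrableOn
  rw [funext h]
  exact (intervalIntegral.integral_hasDerivAt_right
    integrable_phi.intervalIntegrable
    (continuous_phi.stronglyMeasurableAtFilter _ _)
    continuous_phi.continuousAt).const_add _

lemma continuous_Phi : Continuous Phi :=
  continuous_iff_continuousAt.2 fun x => (hasDerivAt_Phi x).continuousAt

lemma hasDerivAt_phi (x : ℝ) : HasDerivAt phi (-x * phi x) x := by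
  unfold phi
  have h : HasDerivAt (fun y : ℝ => -y ^ 2 / 2) (-x) x := by
    have := ((hasDerivAt_pow 2 x).neg.div_const 2)
    refine this.congr_deriv ?_; push_cast; ring
  have := (h.exp).const_mul (Real.sqrt (2 * Real.pi))⁻¹
  refine this.congr_deriv ?_; ring

lemma phi_mul_phi (α τ z : ℝ) :
    phi z * phi (τ * Real.sqrt (1 + α ^ 2) + α * z) =
      phi τ * ((Real.sqrt (2 * π))⁻¹ *
        Real.exp (-((1 + α ^ 2) / 2) * (z + τ * α / Real.sqrt (1 + α ^ 2)) ^ 2)) := by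
  set s := Real.sqrt (1 + α ^ 2) with hsdef
  have hspos : 0 < s := Real.sqrt_pos.2 (by positivity)
  have hs2 : s ^ 2 = 1 + α ^ 2 := Real.sq_sqrt (by positivity)
  have hs : s ≠ 0 := ne_of_gt hspos
  have hexp : (-z ^ 2 / 2) + (-(τ * s + α * z) ^ 2 / 2)
      = (-τ ^ 2 / 2) + (-((1 + α ^ 2) / 2) * (z + τ * α / s) ^ 2) := by
    field_simp
    linear_combination (-τ ^ 2 * s ^ 2 - τ ^ 2 * α ^ 2 - 2 * τ * z * α * s) * hs2
  unfold phi
  rw [mul_mul_mul_comm, ← Real.exp_add, hexp, Real.exp_add]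
  ring

lemma integrable_phi_mul_phi (α τ : ℝ) :
    Integrable (fun z => phi z * phi (τ * Real.sqrt (1 + α ^ 2) + α * z)) := by
  simp only [phi_mul_phi]
  have h : Integrable (fun z : ℝ =>
      Real.exp (-((1 + α ^ 2) / 2) * (z + τ * α / Real.sqrt (1 + α ^ 2)) ^ 2)) := by
    have hmp := measurePreserving_add_right volume (τ * α / Real.sqrt (1 + α ^ 2))
    have hint := integrable_exp_neg_mul_sq (by positivity : (0:ℝ) < (1 + α ^ 2) / 2)
    exact (hmp.integrable_comp hint.aestronglyMeasurable).2 hint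
  exact (h.const_mul _).const_mul _

lemma integral_phi_mul_phi (α τ : ℝ) :
    ∫ z : ℝ, phi z * phi (τ * Real.sqrt (1 + α ^ 2) + α * z)
      = phi τ / Real.sqrt (1 + α ^ 2) := by
  have hspos : 0 < Real.sqrt (1 + α ^ 2) := Real.sqrt_pos.2 (by positivity)
  have hs2 : (Real.sqrt (1 + α ^ 2)) ^ 2 = 1 + α ^ 2 := Real.sq_sqrt (by positivity)
  simp only [phi_mul_phi]
  rw [integral_const_mul, integral_const_mul]
  have htrans : ∫ z : ℝ,
      Real.exp (-((1 + α ^ 2) / 2) * (z + τ * α / Real.sqrt (1 + α ^ 2)) ^ 2)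
      = ∫ z : ℝ, Real.exp (-((1 + α ^ 2) / 2) * z ^ 2) :=
    integral_add_right_eq_self (fun z : ℝ => Real.exp (-((1 + α ^ 2) / 2) * z ^ 2))
      (τ * α / Real.sqrt (1 + α ^ 2))
  rw [htrans, integral_gaussian]
  have h1 : π / ((1 + α ^ 2) / 2) = (2 * π) / (Real.sqrt (1 + α ^ 2)) ^ 2 := by
    rw [hs2, div_div_eq_mul_div]; ring
  rw [h1, Real.sqrt_div (by positivity) , Real.sqrt_sq hspos.le]
  rw [div_eq_mul_inv (phi τ)]
  congr 1
  rw [div_eq_mul_inv, ← mul_assoc, inv_mul_cancel₀ (by positivity : Real.sqrt (2*π) ≠ 0), one_mul]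

lemma integrable_z_phi : Integrable (fun z : ℝ => z * phi z) := by
  have h := (integrable_mul_exp_neg_mul_sq (by norm_num : (0:ℝ) < 1/2)).const_mul
    ((Real.sqrt (2*π))⁻¹)
  refine h.congr (Filter.Eventually.of_forall fun z => ?_)
  simp only [phi_eq]; ring

lemma tendsto_phi_atTop : Tendsto phi atTop (𝓝 0) := by
  unfold phi
  rw [show (0:ℝ) = (Real.sqrt (2*π))⁻¹ * 0 by ring]
  apply Tendsto.const_mul
  apply Real.tendsto_exp_atBot.comp
  have h1 : Tendsto (fun z : ℝ => z ^ 2) atTop atTop := tendsto_pow_atTop (by norm_num)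
  have h2 : Tendsto (fun z : ℝ => -z ^ 2) atTop atBot := tendsto_neg_atBot_iff.2 h1
  exact h2.atBot_div_const (by norm_num)

lemma tendsto_phi_atBot : Tendsto phi atBot (𝓝 0) := by
  have h : Tendsto (fun z : ℝ => phi (-z)) atBot (𝓝 0) :=
    tendsto_phi_atTop.comp tendsto_neg_atBot_atTop
  have he : (fun z : ℝ => phi (-z)) = phi := by
    funext z; unfold phi; rw [neg_pow]; norm_num
  rwa [he] at h

theorem esn_mean (α τ : ℝ) :
    ∫ z : ℝ, z * esnPdf α τ z = zeta1 τ * (α / Real.sqrt (1 + α ^ 2)) := by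
  have hspos : 0 < Real.sqrt (1 + α ^ 2) := Real.sqrt_pos.2 (by positivity)
  have hderiv : ∀ z : ℝ, HasDerivAt (fun z => -(phi z * Phi (τ * Real.sqrt (1 + α ^ 2) + α * z)))
      (z * (phi z * Phi (τ * Real.sqrt (1 + α ^ 2) + α * z))
        - α * (phi z * phi (τ * Real.sqrt (1 + α ^ 2) + α * z))) z := by
    intro z
    have h1 : HasDerivAt (fun z : ℝ => τ * Real.sqrt (1 + α ^ 2) + α * z) α z := by
      simpa using ((hasDerivAt_id z).const_mul α).const_add (τ * Real.sqrt (1 + α ^ 2))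
    have h2 : HasDerivAt (fun z : ℝ => Phi (τ * Real.sqrt (1 + α ^ 2) + α * z))
        (phi (τ * Real.sqrt (1 + α ^ 2) + α * z) * α) z :=
      by have := (hasDerivAt_Phi (τ * Real.sqrt (1 + α ^ 2) + α * z)).comp z h1; exact this
    have h3 := ((hasDerivAt_phi z).mul h2).neg
    refine h3.congr_deriv ?_
    ring
  have hgint : Integrable (fun z : ℝ => z * (phi z * Phi (τ * Real.sqrt (1 + α ^ 2) + α * z))) := by
    refine integrable_z_phi.mono ?_ (Filter.Eventually.of_forall fun z => ?_)
    · exact (continuous_id.mul (continuous_phi.mul (continuous_Phi.comp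
        (continuous_const.add (continuous_const.mul continuous_id))))).aestronglyMeasurable
    · have h0 : (0:ℝ) ≤ Phi (τ * Real.sqrt (1 + α ^ 2) + α * z) := Phi_nonneg _
      have h1 : Phi (τ * Real.sqrt (1 + α ^ 2) + α * z) ≤ 1 := Phi_le_one _
      rw [Real.norm_eq_abs, Real.norm_eq_abs, abs_mul, abs_mul]
      rw [abs_of_nonneg (phi_nonneg z), abs_of_nonneg h0]
      calc |z| * (phi z * Phi (τ * Real.sqrt (1 + α ^ 2) + α * z))
          ≤ |z| * (phi z * 1) := by
            apply mul_le_mul_of_nonneg_left _ (abs_nonneg z)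
            exact mul_le_mul_of_nonneg_left h1 (phi_nonneg z)
        _ = |z| * phi z := by ring
        _ = |z * phi z| := by rw [abs_mul, abs_of_nonneg (phi_nonneg z)]
  have hhint := integrable_phi_mul_phi α τ
  have hF'int : Integrable (fun z : ℝ =>
      z * (phi z * Phi (τ * Real.sqrt (1 + α ^ 2) + α * z))
        - α * (phi z * phi (τ * Real.sqrt (1 + α ^ 2) + α * z))) :=
    hgint.sub (hhint.const_mul α)
  have hbound : ∀ z : ℝ, ‖-(phi z * Phi (τ * Real.sqrt (1 + α ^ 2) + α * z))‖ ≤ phi z := by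
    intro z
    rw [norm_neg, Real.norm_eq_abs, abs_mul, abs_of_nonneg (phi_nonneg z),
      abs_of_nonneg (Phi_nonneg _)]
    calc phi z * Phi (τ * Real.sqrt (1 + α ^ 2) + α * z) ≤ phi z * 1 :=
          mul_le_mul_of_nonneg_left (Phi_le_one _) (phi_nonneg z)
      _ = phi z := mul_one _
  have hF_top : Tendsto (fun z => -(phi z * Phi (τ * Real.sqrt (1 + α ^ 2) + α * z)))
      atTop (𝓝 0) := squeeze_zero_norm hbound tendsto_phi_atTop
  have hF_bot : Tendsto (fun z => -(phi z * Phi (τ * Real.sqrt (1 + α ^ 2) + α * z)))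
      atBot (𝓝 0) := squeeze_zero_norm hbound tendsto_phi_atBot
  have hzero := integral_of_hasDerivAt_of_tendsto hderiv hF'int hF_bot hF_top
  rw [sub_zero] at hzero
  rw [integral_sub hgint (hhint.const_mul α), integral_const_mul,
    integral_phi_mul_phi, sub_eq_zero] at hzero
  have hpt : ∀ z : ℝ, z * esnPdf α τ z
      = (Phi τ)⁻¹ * (z * (phi z * Phi (τ * Real.sqrt (1 + α ^ 2) + α * z))) := by
    intro z; unfold esnPdf; ring
  rw [funext hpt, integral_const_mul, hzero]
  unfold zeta1
  rw [div_eq_mul_inv, div_eq_mul_inv, div_eq_mul_inv]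
  ring
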